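/- Let f̃(l) = E^π[f(θ) | L(θ) = l] and suppose f̃ is absolutely continuous. Then ∫₀¹ φ(x) f̃(φ(x)) dx = ∫ π(θ) L(θ) f(θ) dθ, where φ is the inverse of the survival function of L(θ) under θ ∼ π. -/

import Mathlib

open MeasureTheory

section AuxLemmas
open Set

/-- If `h ∘ L` is a.e. strongly measurable, then `h` is a.e. strongly measurable with
respect to the pushforward measure.  Proved via disintegration. -/
lemma aesm_of_comp {Ω : Type*} [MeasurableSpace Ω] [StandardBorelSpace Ω] [Nonempty Ω]
    (μ : Measure Ω) [IsProbabilityMeasure μ] (L : Ω → ℝ) (hL : Measurable L)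
    (h : ℝ → ℝ) (hh : AEStronglyMeasurable (fun ω => h (L ω)) μ) :
    AEStronglyMeasurable h (μ.map L) := by
  obtain ⟨k, hk, hke⟩ := hh
  have hpair : Measurable (fun ω => (L ω, ω)) := hL.prodMk measurable_id
  set ρ : Measure (ℝ × Ω) := μ.map (fun ω => (L ω, ω)) with hρ
  have hρprob : IsProbabilityMeasure ρ := Measure.isProbabilityMeasure_map hpair.aemeasurable
  have hfst : ρ.fst = μ.map L := by
    rw [hρ, Measure.fst, Measure.map_map measurable_fst hpair]
    rfl
  obtain ⟨N, hNsub, hNmeas, hNnull⟩ :=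
    exists_measurable_superset_of_null (ae_iff.mp hke)
  set C : Set (ℝ × Ω) := {p : ℝ × Ω | L p.2 = p.1 ∧ p.2 ∉ N} with hC
  have hCmeas : MeasurableSet C := by
    apply MeasurableSet.inter
    · exact measurableSet_eq_fun (hL.comp measurable_snd) measurable_fst
    · exact (hNmeas.preimage measurable_snd).compl
  have hnull : ρ Cᶜ = 0 := by
    rw [hρ, Measure.map_apply hpair hCmeas.compl]
    refine measure_mono_null ?_ hNnull
    intro ω hω
    simp only [mem_preimage, mem_compl_iff, hC, mem_setOf_eq, not_and, not_not] at hω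
    exact hω trivial
  have hCae : ∀ᵐ p ∂ρ, p ∈ C := by
    rw [ae_iff]
    exact hnull
  rw [← ρ.disintegrate ρ.condKernel] at hCae
  have h2 := Measure.ae_ae_of_ae_compProd hCae
  set c : ℝ → ℝ := fun t => ∫ ω, Real.arctan (k ω) ∂(ρ.condKernel t) with hc
  have hcmeas : StronglyMeasurable c := by
    apply StronglyMeasurable.integral_kernel_prod_right'
      (f := fun p : ℝ × Ω => Real.arctan (k p.2))
    exact Real.continuous_arctan.comp_stronglyMeasurable (hk.comp_measurable measurable_snd)
  have hkey : ∀ᵐ t ∂ρ.fst, Real.arctan (h t) = c t := by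
    filter_upwards [h2] with t ht
    have heq : (fun ω => Real.arctan (k ω)) =ᵐ[ρ.condKernel t]
        (fun _ => Real.arctan (h t)) := by
      filter_upwards [ht] with ω hω
      obtain ⟨hω1, hω2⟩ := hω
      have : h (L ω) = k ω := by
        by_contra hcon
        exact hω2 (hNsub hcon)
      rw [← this, hω1]
    rw [hc]
    simp only []
    rw [integral_congr_ae heq, integral_const]
    simp
  rw [← hfst]
  refine ⟨fun t => Real.tan (c t), ?_, ?_⟩
  · have : Measurable fun t => Real.tan (c t) := by
      have htan : Measurable Real.tan := by
        have : Real.tan = fun x => Real.sin x / Real.cos x := by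
          funext x; exact Real.tan_eq_sin_div_cos x
        rw [this]
        exact Real.continuous_sin.measurable.div Real.continuous_cos.measurable
      exact htan.comp hcmeas.measurable
    exact this.stronglyMeasurable
  · filter_upwards [hkey] with t ht
    rw [← ht, Real.tan_arctan]

lemma phi_push {d : ℕ} (π : Measure (Fin d → ℝ)) [IsProbabilityMeasure π]
    (L : (Fin d → ℝ) → ℝ) (hLmeas : Measurable L) (hLnn : ∀ θ, 0 ≤ L θ)
    (φ : ℝ → ℝ) (hφanti : StrictAntiOn φ (Set.Ioo 0 1))
    (hφinv : ∀ x ∈ Set.Ioo (0:ℝ) 1, 0 < φ x ∧ (π {θ | φ x < L θ}).toReal = x) :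
    ∃ F : ℝ → ℝ, Measurable F ∧ (∀ x ∈ Set.Ioo (0:ℝ) 1, φ x = F x) ∧
      (volume.restrict (Set.Ioo 0 1)).map F = π.map L := by
  classical
  set F : ℝ → ℝ := fun x => if x ∈ Set.Ioo (0:ℝ) 1 then φ x else 0 with hF
  have key : ∀ t : ℝ, 0 ≤ t →
      MeasurableSet {x | x ∈ Set.Ioo (0:ℝ) 1 ∧ t < φ x} ∧
      volume {x | x ∈ Set.Ioo (0:ℝ) 1 ∧ t < φ x} = π {θ | t < L θ} := by
    intro t ht
    set st := (π {θ | t < L θ}).toReal with hst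
    have hstfin : π {θ | t < L θ} ≠ ⊤ := measure_ne_top _ _
    have hstle : st ≤ 1 := by
      rw [hst]
      refine ENNReal.toReal_le_of_le_ofReal zero_le_one ?_
      simpa using prob_le_one (μ := π) (s := {θ | t < L θ})
    have hsub1 : Set.Ioo 0 st ⊆ {x | x ∈ Set.Ioo (0:ℝ) 1 ∧ t < φ x} := by
      intro x hx
      have hx1 : x ∈ Set.Ioo (0:ℝ) 1 := ⟨hx.1, lt_of_lt_of_le hx.2 hstle⟩
      refine ⟨hx1, ?_⟩
      by_contra hcon
      push_neg at hcon
      have hmono : π {θ | t < L θ} ≤ π {θ | φ x < L θ} :=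
        measure_mono (fun θ hθ => lt_of_le_of_lt hcon hθ)
      have h2 := ENNReal.toReal_mono (measure_ne_top _ _) hmono
      rw [(hφinv x hx1).2] at h2
      exact absurd hx.2 (not_lt.2 h2)
    have hsub2 : {x | x ∈ Set.Ioo (0:ℝ) 1 ∧ t < φ x} ⊆ Set.Ioc 0 st := by
      rintro x ⟨hx1, hx2⟩
      refine ⟨hx1.1, ?_⟩
      have hmono : π {θ | φ x < L θ} ≤ π {θ | t < L θ} :=
        measure_mono (fun θ hθ => lt_trans hx2 hθ)
      have h2 := ENNReal.toReal_mono hstfin hmono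
      rw [(hφinv x hx1).2] at h2
      exact h2
    have hvol : ∀ s : Set ℝ, s = Set.Ioo 0 st ∨ s = Set.Ioc 0 st →
        MeasurableSet s ∧ volume s = π {θ | t < L θ} := by
      rintro s (rfl | rfl)
      · exact ⟨measurableSet_Ioo, by
          rw [Real.volume_Ioo, sub_zero, hst, ENNReal.ofReal_toReal hstfin]⟩
      · exact ⟨measurableSet_Ioc, by
          rw [Real.volume_Ioc, sub_zero, hst, ENNReal.ofReal_toReal hstfin]⟩
    have hSeq : {x | x ∈ Set.Ioo (0:ℝ) 1 ∧ t < φ x} = Set.Ioo 0 st ∨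
        {x | x ∈ Set.Ioo (0:ℝ) 1 ∧ t < φ x} = Set.Ioc 0 st := by
      by_cases hm : st ∈ {x | x ∈ Set.Ioo (0:ℝ) 1 ∧ t < φ x}
      · right
        refine subset_antisymm hsub2 ?_
        rintro x ⟨hx0, hxle⟩
        rcases lt_or_eq_of_le hxle with h | h
        · exact hsub1 ⟨hx0, h⟩
        · rw [h]; exact hm
      · left
        refine subset_antisymm ?_ hsub1
        intro x hx
        exact ⟨(hsub2 hx).1, lt_of_le_of_ne (hsub2 hx).2 (fun h => hm (h ▸ hx))⟩
    exact hvol _ hSeq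
  have hpre : ∀ t : ℝ, 0 ≤ t → F ⁻¹' Set.Ioi t = {x | x ∈ Set.Ioo (0:ℝ) 1 ∧ t < φ x} := by
    intro t ht
    ext x
    simp only [Set.mem_preimage, Set.mem_Ioi, Set.mem_setOf_eq, hF]
    by_cases hx : x ∈ Set.Ioo (0:ℝ) 1
    · rw [if_pos hx]
      exact ⟨fun h => ⟨hx, h⟩, fun h => h.2⟩
    · rw [if_neg hx]
      exact ⟨fun h => absurd h (not_lt.2 ht), fun h => absurd h.1 hx⟩
  have hpre' : ∀ t : ℝ, t < 0 → F ⁻¹' Set.Ioi t = Set.univ := by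
    intro t ht
    ext x
    simp only [Set.mem_preimage, Set.mem_Ioi, Set.mem_univ, iff_true, hF]
    by_cases hx : x ∈ Set.Ioo (0:ℝ) 1
    · simp only [hx, if_true]
      exact lt_trans ht (hφinv x hx).1
    · simp only [hx, if_false]
      exact ht
  have hFmeas : Measurable F := by
    apply measurable_of_Ioi
    intro t
    rcases le_or_gt 0 t with ht | ht
    · rw [hpre t ht]; exact (key t ht).1
    · rw [hpre' t ht]; exact MeasurableSet.univ
  refine ⟨F, hFmeas, fun x hx => (if_pos hx).symm, ?_⟩
  have hlprob : IsProbabilityMeasure (volume.restrict (Set.Ioo (0:ℝ) 1)) := by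
    constructor
    rw [Measure.restrict_apply_univ, Real.volume_Ioo]
    simp
  have hmapF : IsProbabilityMeasure ((volume.restrict (Set.Ioo (0:ℝ) 1)).map F) :=
    Measure.isProbabilityMeasure_map hFmeas.aemeasurable
  have hmapL : IsProbabilityMeasure (π.map L) :=
    Measure.isProbabilityMeasure_map hLmeas.aemeasurable
  have hIoi : ∀ t : ℝ, ((volume.restrict (Set.Ioo (0:ℝ) 1)).map F) (Set.Ioi t)
      = (π.map L) (Set.Ioi t) := by
    intro t
    rw [Measure.map_apply hFmeas measurableSet_Ioi,
      Measure.map_apply hLmeas measurableSet_Ioi,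
      Measure.restrict_apply (hFmeas measurableSet_Ioi)]
    have hLset : L ⁻¹' Set.Ioi t = {θ | t < L θ} := rfl
    rcases le_or_gt 0 t with ht | ht
    · rw [hpre t ht, hLset]
      have hinter : {x | x ∈ Set.Ioo (0:ℝ) 1 ∧ t < φ x} ∩ Set.Ioo 0 1
          = {x | x ∈ Set.Ioo (0:ℝ) 1 ∧ t < φ x} :=
        Set.inter_eq_left.2 (fun x hx => hx.1)
      rw [hinter]
      exact (key t ht).2
    · rw [hpre' t ht, hLset, Set.univ_inter, Real.volume_Ioo]
      have : {θ | t < L θ} = Set.univ := by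
        ext θ; simp only [Set.mem_setOf_eq, Set.mem_univ, iff_true]
        exact lt_of_lt_of_le ht (hLnn θ)
      rw [this, measure_univ]
      simp
  refine Measure.ext_of_Iic _ _ (fun t => ?_)
  have h1 := measure_compl (μ := (volume.restrict (Set.Ioo (0:ℝ) 1)).map F)
    (measurableSet_Ioi (a := t)) (measure_ne_top _ _)
  have h2 := measure_compl (μ := π.map L) (measurableSet_Ioi (a := t)) (measure_ne_top _ _)
  rw [compl_Ioi] at h1 h2
  rw [h1, h2, measure_univ, measure_univ, hIoi]

end AuxLemmas

/-- Lemma 1 of Chopin & Robert: if `f̃(l) = E^π[f(θ) | L(θ) = l]` is absolutely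
continuous (i.e. an integral of an integrable function) and `φ` is the decreasing
inverse of the survival function of `L(θ)` under `θ ∼ π`, then
`∫₀¹ φ(x) f̃(φ(x)) dx = ∫ π(θ) L(θ) f(θ) dθ`. -/
theorem nested_sampling_posterior_lemma
    {d : ℕ} (π : Measure (Fin d → ℝ)) [IsProbabilityMeasure π]
    (L f : (Fin d → ℝ) → ℝ) (ftilde ftilde' : ℝ → ℝ)
    (hLmeas : Measurable L) (hLnn : ∀ θ : Fin d → ℝ, 0 ≤ L θ)
    (hLint : Integrable L π)
    -- `f̃` is absolutely continuous:
    (habs : IntervalIntegrable ftilde' volume 0 (⨆ θ, L θ) ∧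
      ∀ l ∈ Set.Icc 0 (⨆ θ, L θ), ftilde l = ftilde 0 + ∫ t in (0:ℝ)..l, ftilde' t)
    -- `f̃(l)` is a version of the conditional expectation `E^π[f(θ) | L(θ) = l]`:
    (hcond : ∀ g : ℝ → ℝ, Measurable g →
      Integrable (fun θ => g (L θ) * f θ) π →
      ∫ θ, g (L θ) * f θ ∂π = ∫ θ, g (L θ) * ftilde (L θ) ∂π)
    (hfint : Integrable (fun θ => L θ * f θ) π)
    (φ : ℝ → ℝ) (hφanti : StrictAntiOn φ (Set.Ioo 0 1))
    (hφinv : ∀ x ∈ Set.Ioo (0:ℝ) 1,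
      0 < φ x ∧ (π {θ | φ x < L θ}).toReal = x) :
    ∫ x in (0:ℝ)..1, φ x * ftilde (φ x) = ∫ θ, L θ * f θ ∂π := by
  obtain ⟨F, hFmeas, hFeq, hFmap⟩ := phi_push π L hLmeas hLnn φ hφanti hφinv
  have hνprob : IsProbabilityMeasure (volume.restrict (Set.Ioo (0:ℝ) 1)) := by
    constructor
    rw [Measure.restrict_apply_univ, Real.volume_Ioo]
    simp
  set h : ℝ → ℝ := fun t => t * ftilde t with hhdef
  have hφae : φ =ᵐ[volume.restrict (Set.Ioo (0:ℝ) 1)] F :=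
    (ae_restrict_iff' measurableSet_Ioo).2 (Filter.Eventually.of_forall fun x hx => hFeq x hx)
  have hφF : (fun x => h (φ x)) =ᵐ[volume.restrict (Set.Ioo (0:ℝ) 1)] (fun x => h (F x)) :=
    hφae.mono fun x hx => by simp only [hx]
  have hRHS : ∫ θ, L θ * f θ ∂π = ∫ θ, h (L θ) ∂π := by
    have hc := hcond id measurable_id (by simpa using hfint)
    simpa [hhdef] using hc
  by_cases hm : AEStronglyMeasurable (fun θ => h (L θ)) π
  · have hmap : AEStronglyMeasurable h (π.map L) := aesm_of_comp π L hLmeas h hm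
    obtain ⟨h', hh'sm, hh'e⟩ := hmap
    have hcompL : (fun θ => h (L θ)) =ᵐ[π] fun θ => h' (L θ) :=
      ae_eq_comp hLmeas.aemeasurable hh'e
    have hh'eF : h =ᵐ[Measure.map F (volume.restrict (Set.Ioo (0:ℝ) 1))] h' := by
      rw [hFmap]; exact hh'e
    have hcompF : (fun x => h (F x)) =ᵐ[volume.restrict (Set.Ioo (0:ℝ) 1)]
        fun x => h' (F x) := ae_eq_comp hFmeas.aemeasurable hh'eF
    calc ∫ x in (0:ℝ)..1, φ x * ftilde (φ x)
        = ∫ x in Set.Ioc (0:ℝ) 1, h (φ x) ∂volume :=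
          intervalIntegral.integral_of_le zero_le_one
      _ = ∫ x in Set.Ioo (0:ℝ) 1, h (φ x) ∂volume := integral_Ioc_eq_integral_Ioo
      _ = ∫ x in Set.Ioo (0:ℝ) 1, h' (F x) ∂volume :=
          integral_congr_ae (hφF.trans hcompF)
      _ = ∫ t, h' t ∂(Measure.map F (volume.restrict (Set.Ioo (0:ℝ) 1))) :=
          (integral_map hFmeas.aemeasurable hh'sm.aestronglyMeasurable).symm
      _ = ∫ t, h' t ∂(Measure.map L π) := by rw [hFmap]
      _ = ∫ θ, h' (L θ) ∂π := integral_map hLmeas.aemeasurable hh'sm.aestronglyMeasurable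
      _ = ∫ θ, h (L θ) ∂π := (integral_congr_ae hcompL).symm
      _ = ∫ θ, L θ * f θ ∂π := hRHS.symm
  · have hnotiv : ¬ IntervalIntegrable (fun x => φ x * ftilde (φ x)) volume 0 1 := by
      intro hiv
      have h1 : IntegrableOn (fun x => h (φ x)) (Set.Ioc (0:ℝ) 1) volume :=
        (intervalIntegrable_iff_integrableOn_Ioc_of_le zero_le_one).1 hiv
      have h2 : AEStronglyMeasurable (fun x => h (φ x))
          (volume.restrict (Set.Ioo (0:ℝ) 1)) :=
        h1.aestronglyMeasurable.mono_measure
          (Measure.restrict_mono Set.Ioo_subset_Ioc_self le_rfl)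
      have h3 : AEStronglyMeasurable (fun x => h (F x))
          (volume.restrict (Set.Ioo (0:ℝ) 1)) := h2.congr hφF
      have h4 := aesm_of_comp (volume.restrict (Set.Ioo (0:ℝ) 1)) F hFmeas h h3
      rw [hFmap] at h4
      exact hm (h4.comp_aemeasurable hLmeas.aemeasurable)
    rw [intervalIntegral.integral_undef hnotiv, hRHS,
      integral_non_aestronglyMeasurable hm]
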